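/- With u as in the previous counterexample (u(x,t) = (1+it)^{-2k-n/2}(1+|x|²)^{-k} e^{-(1-it)|x|²/(4(1+t²))}, k > n/2), the functions e^{|x|²/8} u(x, 1) and e^{|x|²/8} u(x, -1) belong to L²(ℝⁿ), and u is not identically zero. -/

import Mathlib

open Set MeasureTheory


lemma key_integrable (n : ℕ) (k : ℝ) (hk : (n : ℝ) / 2 < k) :
    Integrable (fun x : Fin n → ℝ => (1 + ∑ i, (x i) ^ 2) ^ (-(2 * k))) := by
  have hk0 : 0 < k := lt_of_le_of_lt (by positivity) hk
  have h4k : (Module.finrank ℝ (Fin n → ℝ) : ℝ) < 4 * k := by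
    simp [Module.finrank_fintype_fun_eq_card]
    linarith
  have hbase : Integrable (fun x : Fin n → ℝ => (2 : ℝ) ^ (2 * k) * (1 + ‖x‖) ^ (-(4 * k))) :=
    (integrable_one_add_norm h4k).const_mul _
  apply hbase.mono'
  · apply Continuous.aestronglyMeasurable
    apply Continuous.rpow_const
    · continuity
    · intro x
      left
      positivity
  · filter_upwards with x
    have hs : 0 ≤ ∑ i, (x i) ^ 2 := by positivity
    have hnorm : ‖x‖ ^ 2 ≤ ∑ i, (x i) ^ 2 := by
      have hle : ‖x‖ ≤ Real.sqrt (∑ i, (x i) ^ 2) := by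
        rw [pi_norm_le_iff_of_nonneg (Real.sqrt_nonneg _)]
        intro i
        rw [show ‖x i‖ = |x i| from rfl, ← Real.sqrt_sq_eq_abs]
        exact Real.sqrt_le_sqrt (Finset.single_le_sum (f := fun j => (x j) ^ 2) (fun j _ => by positivity) (Finset.mem_univ i))
      nlinarith [Real.sq_sqrt hs, Real.sqrt_nonneg (∑ i, (x i) ^ 2), norm_nonneg x]
    have hineq : (1 + ‖x‖) ^ 2 / 2 ≤ 1 + ∑ i, (x i) ^ 2 := by
      nlinarith [sq_nonneg (1 - ‖x‖), norm_nonneg x]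
    have h1 : (0:ℝ) < (1 + ‖x‖) ^ 2 / 2 := by positivity
    have hmain := Real.rpow_le_rpow_of_nonpos h1 hineq (by linarith : -(2*k) ≤ 0)
    rw [Real.norm_eq_abs, abs_of_nonneg (Real.rpow_nonneg (by linarith) _)]
    calc (1 + ∑ i, (x i) ^ 2) ^ (-(2*k)) ≤ ((1 + ‖x‖) ^ 2 / 2) ^ (-(2*k)) := hmain
    _ = (2:ℝ) ^ (2*k) * (1 + ‖x‖) ^ (-(4*k)) := by
        rw [Real.div_rpow (by positivity) (by norm_num), ← Real.rpow_natCast (1 + ‖x‖) 2,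
          ← Real.rpow_mul (by positivity)]
        have e1 : ((2:ℕ):ℝ) * -(2*k) = -(4*k) := by push_cast; ring
        rw [e1, Real.rpow_neg (by norm_num : (0:ℝ) ≤ 2), div_eq_mul_inv, inv_inv, mul_comm]


lemma abs_u_sq (k s t : ℝ) (hs : 0 ≤ s) (ht : t ^ 2 = 1) (c : ℂ) :
    Real.exp (s / 4) * ‖
      (((1 : ℂ) + Complex.I * (t : ℂ)) ^ c *
        (((1 + s) ^ (-k) : ℝ) : ℂ) *
        Complex.exp (-((1 - Complex.I * (t : ℂ)) / (4 * ((1 + t ^ 2 : ℝ) : ℂ))) * (s : ℂ)))‖ ^ 2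
    = ‖(((1 : ℂ) + Complex.I * (t : ℂ)) ^ c)‖ ^ 2 * (1 + s) ^ (-(2 * k)) := by
  have h1s : (0:ℝ) < 1 + s := by linarith
  have hz : (-((1 - Complex.I * (t : ℂ)) / (4 * ((1 + t ^ 2 : ℝ) : ℂ))) * (s : ℂ))
      = Complex.ofReal (-(s / 8)) + Complex.ofReal (t * s / 8) * Complex.I := by
    have h2 : ((1 + t ^ 2 : ℝ) : ℂ) = 2 := by push_cast [ht]; norm_num
    rw [h2]
    push_cast
    field_simp
    ring
  rw [hz]
  rw [norm_mul, norm_mul, Complex.norm_exp]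
  simp only [Complex.add_re, Complex.ofReal_re, Complex.mul_re, Complex.I_re, Complex.I_im,
    Complex.ofReal_im, mul_zero, zero_mul, sub_zero, mul_one]
  rw [Complex.norm_real, Real.norm_eq_abs, abs_of_nonneg (Real.rpow_nonneg (by linarith) _)]
  rw [mul_pow, mul_pow]
  rw [← Real.exp_nat_mul, ← Real.rpow_natCast ((1+s) ^ (-k)), ← Real.rpow_mul (le_of_lt h1s)]
  rw [show -(s/8) + 0 = -(s/8) by ring]
  have e0 : (s/4) + ((2:ℕ) * -(s/8)) = 0 := by push_cast; ring
  have : Real.exp (s / 4) * ((2:ℕ) * -(s/8)).exp = 1 := by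
    rw [← Real.exp_add, e0, Real.exp_zero]
  have e : -k * ((2:ℕ):ℝ) = -(2*k) := by push_cast; ring
  calc Real.exp (s / 4) *
      (‖(((1:ℂ) + Complex.I * t) ^ c)‖ ^ 2 * (1+s) ^ (-k * (2:ℕ)) * Real.exp ((2:ℕ) * -(s/8)))
      = ‖(((1:ℂ) + Complex.I * t) ^ c)‖ ^ 2 * (1+s) ^ (-k * (2:ℕ)) *
        (Real.exp (s/4) * Real.exp ((2:ℕ) * -(s/8))) := by ring
    _ = ‖(((1:ℂ) + Complex.I * t) ^ c)‖ ^ 2 * (1 + s) ^ (-(2 * k)) := by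
        rw [this, mul_one, e]

/-- For `u(x,t) = (1+it)^{-2k-n/2}(1+|x|²)^{-k} e^{-(1-it)|x|²/(4(1+t²))}` with `k > n/2`,
the functions `e^{|x|²/8} u(x, ±1)` belong to `L²(ℝⁿ)` (i.e. `∫ e^{|x|²/4}|u(x,±1)|² dx < ∞`),
and `u` is not identically zero. -/
theorem stmt6 (n : ℕ) (k : ℝ) (hk : (n : ℝ) / 2 < k)
    (u : (Fin n → ℝ) → ℝ → ℂ)
    (hu : ∀ (x : Fin n → ℝ) (t : ℝ), u x t =
      ((1 : ℂ) + Complex.I * (t : ℂ)) ^ ((-(2 * k + (n : ℝ) / 2) : ℝ) : ℂ) *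
        (((1 + ∑ i, (x i) ^ 2) ^ (-k) : ℝ) : ℂ) *
        Complex.exp (-((1 - Complex.I * (t : ℂ)) / (4 * ((1 + t ^ 2 : ℝ) : ℂ))) *
          ((∑ i, (x i) ^ 2 : ℝ) : ℂ))) :
    Integrable (fun x : Fin n → ℝ =>
        Real.exp ((∑ i, (x i) ^ 2) / 4) * ‖u x 1‖ ^ 2) ∧
    Integrable (fun x : Fin n → ℝ =>
        Real.exp ((∑ i, (x i) ^ 2) / 4) * ‖u x (-1)‖ ^ 2) ∧
    ∃ (x : Fin n → ℝ) (t : ℝ), u x t ≠ 0 := by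
  refine ⟨?_, ?_, ⟨0, 0, ?_⟩⟩
  · have heq : (fun x : Fin n → ℝ =>
        Real.exp ((∑ i, (x i) ^ 2) / 4) * ‖u x 1‖ ^ 2)
        = fun x : Fin n → ℝ =>
          ‖((1 : ℂ) + Complex.I * ((1:ℝ) : ℂ)) ^ ((-(2 * k + (n : ℝ) / 2) : ℝ) : ℂ)‖ ^ 2 *
            (1 + ∑ i, (x i) ^ 2) ^ (-(2 * k)) := by
      funext x
      rw [hu x 1, abs_u_sq k (∑ i, (x i) ^ 2) 1 (by positivity) (by norm_num)]
    rw [heq]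
    exact (key_integrable n k hk).const_mul _
  · have heq : (fun x : Fin n → ℝ =>
        Real.exp ((∑ i, (x i) ^ 2) / 4) * ‖u x (-1)‖ ^ 2)
        = fun x : Fin n → ℝ =>
          ‖((1 : ℂ) + Complex.I * ((-1:ℝ) : ℂ)) ^ ((-(2 * k + (n : ℝ) / 2) : ℝ) : ℂ)‖ ^ 2 *
            (1 + ∑ i, (x i) ^ 2) ^ (-(2 * k)) := by
      funext x
      rw [hu x (-1), abs_u_sq k (∑ i, (x i) ^ 2) (-1) (by positivity) (by norm_num)]
    rw [heq]
    exact (key_integrable n k hk).const_mul _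
  · rw [hu 0 0]
    simp [Complex.exp_ne_zero]
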